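/- arXiv:1502.06573 — 6 statements merged into one kernel-verified Lean document; each statement's English description precedes it below -/
import Mathlib

section
/- Let $X$ be a Noetherian topological space, let $\kappa$ be an infinite cardinal such that the set of open subsets of $X$ has cardinality at most $\kappa$, and let $F$ be a presheaf of abelian groups on $X$ such that $|F(U)| \le \kappa$ for every open subset $U \subseteq X$. Then the sheafification $aF$ of $F$ also satisfies $|aF(U)| \le \kappa$ for every open subset $U \subseteq X$. -/
open CategoryTheory TopologicalSpace Cardinal Opposite


/-- Let `X` be a Noetherian topological space, `κ` an infinite
cardinal such that the set of open subsets of `X` has cardinality at most `κ`, and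
`F` a presheaf of abelian groups on `X` with `|F(U)| ≤ κ` for every open `U`. Then
the sheafification `aF` of `F` also satisfies `|aF(U)| ≤ κ` for every open `U`. -/
theorem card_sections_sheafify_le (X : TopCat) [NoetherianSpace X]
    (κ : Cardinal) (hκ : Cardinal.aleph0 ≤ κ) (hOp : #(Opens X) ≤ κ)
    (F : (Opens X)ᵒᵖ ⥤ AddCommGrpCat)
    (hF : ∀ U : Opens X, #(F.obj (op U)) ≤ κ) :
    ∀ U : Opens X,
      #((CategoryTheory.sheafify (Opens.grothendieckTopology X) F).obj (op U)) ≤ κ := by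
  classical
  intro U
  set J := Opens.grothendieckTopology X with hJdef
  let aF := CategoryTheory.sheafify J F
  let φ : F ⟶ aF := CategoryTheory.toSheafify J F
  let G : TopCat.Sheaf AddCommGrpCat X := (presheafToSheaf J AddCommGrpCat).obj F
  -- the type of "finite data" we use to pin down sections of the sheafification
  let T := Σ L : List (Opens X), ∀ i : Fin L.length, (F.obj (op (L.get i)) : Type)
  -- matching predicate
  let M : T → (aF.obj (op U) : Type) → Prop := fun p s =>
    (∀ i : Fin p.1.length, p.1.get i ≤ U) ∧
    (U ≤ ⨆ i : Fin p.1.length, p.1.get i) ∧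
    ∀ (i : Fin p.1.length) (h : p.1.get i ≤ U),
      φ.app (op (p.1.get i)) (p.2 i) = aF.map (homOfLE h).op s
  -- every section matches some data
  have hex : ∀ s : (aF.obj (op U) : Type), ∃ p : T, M p s := by
    intro s
    have hs : Presheaf.imageSieve φ s ∈ J U := Presheaf.imageSieve_mem J φ s
    set ι := {V : Opens X // ∃ h : V ≤ U, (Presheaf.imageSieve φ s).arrows (homOfLE h)} with hι
    have hcov : (U : Set X) ⊆ ⋃ i : ι, (i.1 : Set X) := by
      intro x hx
      obtain ⟨V, f, hf, hxV⟩ := hs x hx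
      refine Set.mem_iUnion.2 ⟨⟨V, f.le, ?_⟩, hxV⟩
      convert hf using 2
      exact Subsingleton.elim _ _
    obtain ⟨fs, hfs⟩ := (NoetherianSpace.isCompact (U : Set X)).elim_finite_subcover
      (fun i : ι => (i.1 : Set X)) (fun i => i.1.2) hcov
    set L : List (Opens X) := fs.toList.map Subtype.val with hLdef
    have hprop : ∀ V ∈ L, ∃ h : V ≤ U, (Presheaf.imageSieve φ s).arrows (homOfLE h) := by
      intro V hV
      rcases List.mem_map.1 hV with ⟨j, _, rfl⟩
      exact j.2
    refine ⟨⟨L, fun i => ((hprop (L.get i) (L.get_mem i)).choose_spec).choose⟩, ?_, ?_, ?_⟩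
    · exact fun i => (hprop (L.get i) (L.get_mem i)).choose
    · intro x hx
      rcases Set.mem_iUnion₂.1 (hfs hx) with ⟨j, hj, hxj⟩
      have hmem : (j.1 : Opens X) ∈ L := List.mem_map.2 ⟨j, Finset.mem_toList.2 hj, rfl⟩
      rcases List.mem_iff_get.1 hmem with ⟨i, hi⟩
      exact Opens.mem_iSup.2 ⟨i, by rw [hi]; exact hxj⟩
    · intro i h
      have hspec := ((hprop (L.get i) (L.get_mem i)).choose_spec).choose_spec
      refine hspec.trans ?_
      congr 1
  -- any two sections matching the same data are equal (separation for the sheaf `G`)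
  have huniq : ∀ (p : T) (s s' : (aF.obj (op U) : Type)), M p s → M p s' → s = s' := by
    rintro ⟨L, t⟩ s s' ⟨h1, h2, h3⟩ ⟨h1', h2', h3'⟩
    refine G.eq_of_locally_eq' (fun i : Fin L.length => L.get i) U
      (fun i => homOfLE (h1 i)) h2 s s' ?_
    intro i
    exact (h3 i (h1 i)).symm.trans (h3' i (h1 i))
  -- a surjection from `T` onto the sections of the sheafification
  let g : T → (aF.obj (op U) : Type) := fun p =>
    if h : ∃ s, M p s then h.choose else 0
  have hg : Function.Surjective g := by
    intro s
    obtain ⟨p, hp⟩ := hex s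
    refine ⟨p, ?_⟩
    have h : ∃ s, M p s := ⟨s, hp⟩
    simp only [g, dif_pos h]
    exact huniq p h.choose s h.choose_spec hp
  -- cardinality bound on `T`
  have hT : #T ≤ κ := by
    have h1 : #T ≤ Cardinal.sum fun L : List (Opens X) => κ := by
      rw [Cardinal.mk_sigma]
      refine Cardinal.sum_le_sum _ _ fun L => ?_
      calc #(∀ i : Fin L.length, (F.obj (op (L.get i)) : Type))
          = Cardinal.prod fun i : Fin L.length => #(F.obj (op (L.get i))) :=
            Cardinal.mk_pi _
        _ ≤ Cardinal.prod fun _ : Fin L.length => κ :=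
            Cardinal.prod_le_prod _ _ fun i => hF _
        _ = κ ^ (#(Fin L.length)) := Cardinal.prod_const' _ _
        _ = κ ^ (L.length : Cardinal) := by rw [Cardinal.mk_fin]
        _ = κ ^ (L.length : ℕ) := by rw [Cardinal.power_natCast]
        _ ≤ κ := Cardinal.power_nat_le hκ
    have h2 : (Cardinal.sum fun _ : List (Opens X) => κ) = #(List (Opens X)) * κ :=
      Cardinal.sum_const' _ _
    have h3 : #(List (Opens X)) ≤ κ :=
      (Cardinal.mk_list_le_max _).trans (max_le hκ hOp)
    calc #T ≤ #(List (Opens X)) * κ := by rw [← h2]; exact h1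
      _ ≤ κ * κ := mul_le_mul' h3 le_rfl
      _ = κ := Cardinal.mul_eq_self hκ
  exact (Cardinal.mk_le_of_surjective hg).trans hT
end

section
/- Let $k$ be a field, let $\kappa$ be an infinite cardinal with $|k| \le \kappa$, and let $X$ be a scheme of finite type over $k$. Let $M$ be a sheaf of $\mathcal{O}_X$-modules such that for every affine open subset $W \subseteq X$ the $\mathcal{O}_X(W)$-module $M(W)$ is finitely generated. Then $|M(U)| \le \kappa$ for every open subset $U$ of $X$. -/
open CategoryTheory TopologicalSpace AlgebraicGeometry Opposite Cardinal

private lemma auxA_card_fg_algebra {A B : Type} [CommRing A] [CommRing B] [Algebra A B]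
    [h : Algebra.FiniteType A B] {κ : Cardinal} (hκ : ℵ₀ ≤ κ) (hA : #A ≤ κ) : #B ≤ κ := by
  obtain ⟨n, g, hg⟩ := Algebra.FiniteType.iff_quotient_mvPolynomial''.mp h
  refine (Cardinal.mk_le_of_surjective hg).trans ?_
  refine (MvPolynomial.cardinalMk_le_max (σ := Fin n) (R := A)).trans ?_
  simp only [max_le_iff]
  exact ⟨⟨hA, ((Cardinal.lt_aleph0_of_finite (Fin n)).le.trans hκ)⟩, hκ⟩

private lemma auxB_card_fg_module {R M : Type} [Semiring R] [AddCommMonoid M] [Module R M]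
    [h : Module.Finite R M] {κ : Cardinal} (hκ : ℵ₀ ≤ κ) (hR : #R ≤ κ) : #M ≤ κ := by
  obtain ⟨n, g, hg⟩ := Module.Finite.exists_fin' R M
  refine (Cardinal.mk_le_of_surjective hg).trans ?_
  rw [Cardinal.mk_arrow]
  simp only [Cardinal.lift_id, Cardinal.mk_fin, Cardinal.lift_natCast, Cardinal.lift_id']
  calc (#R) ^ (n : Cardinal) ≤ κ ^ (n : Cardinal) := by
        rcases Nat.eq_zero_or_pos n with h0 | h0
        · simp [h0]
        · exact Cardinal.power_le_power_right hR
      _ ≤ κ := by exact_mod_cast Cardinal.power_nat_le hκ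

/-- Let `k` be a field, `κ` an infinite cardinal with `|k| ≤ κ`, and
`X` a scheme of finite type over `k`. Let `M` be a sheaf of `𝒪_X`-modules such that
for every affine open `W ⊆ X` the `𝒪_X(W)`-module `M(W)` is finitely generated.
Then `|M(U)| ≤ κ` for every open subset `U` of `X`. -/
theorem card_sections_coherent_sheaf_le (k : Type) [Field k]
    (κ : Cardinal) (hκ : Cardinal.aleph0 ≤ κ) (hk : #k ≤ κ)
    (X : Scheme) (f : X ⟶ Spec (CommRingCat.of k))
    [LocallyOfFiniteType f] [CompactSpace X]
    (M : SheafOfModules.{0}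
      ((sheafCompose (Opens.grothendieckTopology X)
        (forget₂ CommRingCat RingCat)).obj X.sheaf))
    (hM : ∀ W : Opens X, IsAffineOpen W →
      Module.Finite (((sheafCompose (Opens.grothendieckTopology X)
        (forget₂ CommRingCat RingCat)).obj X.sheaf).val.obj (op W)) (M.val.obj (op W))) :
    ∀ U : Opens X, #(M.val.obj (op U)) ≤ κ := by
  -- the base ring `A = Γ(Spec k, ⊤) ≃ k`
  have e : Γ(Spec (CommRingCat.of k), ⊤) ≃+* k :=
    (Scheme.ΓSpecIso (CommRingCat.of k)).commRingCatIsoToRingEquiv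
  have hAcard : #(Γ(Spec (CommRingCat.of k), ⊤)) ≤ κ :=
    le_trans (le_of_eq (Cardinal.mk_congr e.toEquiv)) hk
  have hAnoeth : IsNoetherianRing (Γ(Spec (CommRingCat.of k), ⊤)) :=
    isNoetherianRing_of_ringEquiv k e.symm
  -- each affine open has Noetherian, small ring of sections
  have hFT : ∀ W : X.affineOpens, RingHom.FiniteType (f.appLE ⊤ W.1 le_top).hom := fun W =>
    HasRingHomProperty.appLE (P := @LocallyOfFiniteType) f ‹_› ⟨⊤, isAffineOpen_top _⟩ W le_top
  have hGamma : ∀ W : X.affineOpens, IsNoetherianRing Γ(X, W.1) ∧ #(Γ(X, W.1)) ≤ κ := by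
    intro W
    have h := hFT W
    letI : Algebra (Γ(Spec (CommRingCat.of k), ⊤)) Γ(X, W.1) := (f.appLE ⊤ W.1 le_top).hom.toAlgebra
    haveI : Algebra.FiniteType (Γ(Spec (CommRingCat.of k), ⊤)) Γ(X, W.1) := h
    exact ⟨Algebra.FiniteType.isNoetherianRing (Γ(Spec (CommRingCat.of k), ⊤)) Γ(X, W.1), auxA_card_fg_algebra hκ hAcard⟩
  haveI : IsLocallyNoetherian X := ⟨fun W => (hGamma W).1⟩
  haveI : IsNoetherian X := ⟨⟩
  intro U
  -- a finite affine open cover of `U`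
  obtain ⟨ι, hι, W, hWU, hcov⟩ : ∃ (ι : Type) (_ : Finite ι) (W : ι → X.affineOpens),
      (∀ i, (W i).1 ≤ U) ∧ U ≤ ⨆ i, (W i).1 := by
    have hU : IsCompact (U : Set X) := NoetherianSpace.isCompact _
    have hsel : ∀ x : X, x ∈ U → ∃ W : X.affineOpens, x ∈ W.1 ∧ W.1 ≤ U := by
      intro x hx
      obtain ⟨_, ⟨V, hV, rfl⟩, hxV, hVU⟩ :=
        X.isBasis_affineOpens.exists_subset_of_mem_open hx U.isOpen
      exact ⟨⟨V, hV⟩, hxV, hVU⟩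
    choose W hxW hWU using hsel
    obtain ⟨t, ht⟩ := hU.elim_finite_subcover (fun x : U => ((W x x.2).1 : Set X))
      (fun x => (W x x.2).1.isOpen) (fun x hx => Set.mem_iUnion.mpr ⟨⟨x, hx⟩, hxW x hx⟩)
    refine ⟨↥t, inferInstance, fun i => W i.1 i.1.2, fun i => hWU _ _, ?_⟩
    intro x hx
    obtain ⟨y, hyt, hy⟩ := by simpa only [Set.mem_iUnion] using ht hx
    exact Opens.mem_iSup.mpr ⟨⟨y, hyt⟩, hy⟩
  -- sections over `U` inject into the product of sections over the cover
  obtain ⟨g, hg⟩ : ∃ g : (M.val.obj (op U)) → (∀ i, M.val.obj (op (W i).1)),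
      Function.Injective g := by
    let F : TopCat.Sheaf AddCommGrpCat.{0} X := ⟨M.val.presheaf, M.isSheaf⟩
    refine ⟨fun s i => M.val.map (homOfLE (hWU i)).op s, fun s t h => ?_⟩
    exact F.eq_of_locally_eq' (fun i => (W i).1) U (fun i => homOfLE (hWU i)) hcov s t
      (fun i => congrFun h i)
  refine (Cardinal.mk_le_of_injective hg).trans ?_
  -- bound the cardinality of the finite product
  haveI := Fintype.ofFinite ι
  calc #(∀ i, M.val.obj (op (W i).1))
      = Cardinal.prod (fun i => #(M.val.obj (op (W i).1))) := Cardinal.mk_pi _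
    _ ≤ Cardinal.prod (fun _ : ι => κ) := by
        refine Cardinal.prod_le_prod _ _ (fun i => ?_)
        haveI := hM (W i).1 (W i).2
        exact auxB_card_fg_module (R := ((sheafCompose (Opens.grothendieckTopology X)
          (forget₂ CommRingCat RingCat)).obj X.sheaf).val.obj (op (W i).1)) hκ (hGamma (W i)).2
    _ = κ ^ (#ι) := Cardinal.prod_const' _ _
    _ ≤ κ := by
        rw [Cardinal.mk_fintype]
        exact_mod_cast Cardinal.power_nat_le hκ
end

section
/- Let $k$ be a field, let $\kappa$ be an infinite cardinal with $|k| \le \kappa$, let $X$ be a scheme of finite type over $k$, and let $V \subseteq X$ be an open subset. Let $P$ be the presheaf of abelian groups on $X$ defined by $P(U) = \mathcal{O}_X(U)$ if $U \subseteq V$ and $P(U) = 0$ otherwise, with restriction maps those of $\mathcal{O}_X$ when both opens are contained in $V$ and the zero map otherwise. Then the sheafification $aP$ of $P$ satisfies $|aP(U)| \le \kappa$ for every open subset $U$ of $X$. -/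
open CategoryTheory TopologicalSpace AlgebraicGeometry Opposite Cardinal
open scoped Classical

/-- The subgroup of `𝒪_X(U)` which is everything when `U ⊆ V` and zero otherwise. -/
noncomputable def extByZeroSubgroup (X : Scheme) (V : Opens X)
    (U : (Opens X)ᵒᵖ) : AddSubgroup (X.presheaf.obj U) :=
  if (unop U) ≤ V then ⊤ else ⊥

/-- The presheaf of abelian groups `P` on `X` with `P(U) = 𝒪_X(U)` if `U ⊆ V` and
`P(U) = 0` otherwise, with restriction maps those of `𝒪_X` when both opens are
contained in `V` and the zero map otherwise. -/
noncomputable def extByZeroPresheaf (X : Scheme) (V : Opens X) :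
    (Opens X)ᵒᵖ ⥤ AddCommGrpCat where
  obj U := AddCommGrpCat.of (extByZeroSubgroup X V U)
  map {U W} i := AddCommGrpCat.ofHom <|
    ((X.presheaf.map i).hom.toAddMonoidHom.domRestrict (extByZeroSubgroup X V U)).codRestrict
      (extByZeroSubgroup X V W) (by
        intro x
        by_cases hw : (unop W) ≤ V
        · simp only [extByZeroSubgroup, if_pos hw]
          trivial
        · have hu : ¬ (unop U ≤ V) := fun h => hw ((leOfHom i.unop).trans h)
          have hx : (x : X.presheaf.obj U) = 0 := by
            have h2 := x.2
            simp only [extByZeroSubgroup, if_neg hu, AddSubgroup.mem_bot] at h2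
            exact h2
          rw [AddMonoidHom.domRestrict_apply, hx, map_zero]
          simp only [extByZeroSubgroup, if_neg hw, AddMonoidHom.domRestrict_apply, hx,
            AddSubgroup.mem_bot, map_zero])
  map_id U := by
    ext x
    simp only [AddCommGrpCat.hom_ofHom, AddCommGrpCat.hom_id, AddCommGrpCat.hom_comp,
      AddMonoidHom.codRestrict_apply,
      AddMonoidHom.domRestrict_apply, CategoryTheory.Functor.map_id] <;>
    rfl
  map_comp {U W Z} i j := by
    ext x
    simp only [AddCommGrpCat.hom_ofHom, AddCommGrpCat.hom_id, AddCommGrpCat.hom_comp,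
      AddMonoidHom.codRestrict_apply,
      AddMonoidHom.domRestrict_apply, CategoryTheory.Functor.map_comp] <;>
    rfl


section AuxCard

lemma aux_cardinalMk_le_of_ringHom_finiteType {A B : Type} [CommRing A] [CommRing B]
    (φ : A →+* B) (h : φ.FiniteType) : #B ≤ max #A ℵ₀ := by
  letI := φ.toAlgebra
  have h' : Algebra.FiniteType A B := h
  obtain ⟨n, f, hf⟩ := Algebra.FiniteType.iff_quotient_mvPolynomial''.mp h'
  refine (Cardinal.mk_le_of_surjective hf).trans ?_
  refine (MvPolynomial.cardinalMk_le_max).trans ?_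
  have : #(Fin n) ≤ ℵ₀ := (Cardinal.lt_aleph0_of_finite _).le
  simp only [max_le_iff]
  exact ⟨⟨le_max_left _ _, this.trans (le_max_right _ _)⟩, le_max_right _ _⟩

variable (k : Type) [Field k] (κ : Cardinal) (hκ : Cardinal.aleph0 ≤ κ) (hk : #k ≤ κ)
  (X : Scheme) (f : X ⟶ Spec (CommRingCat.of k)) [LocallyOfFiniteType f] [CompactSpace X]

set_option linter.unusedSectionVars false

include hκ hk f in
lemma aux_card_affine_sections_le (W : X.affineOpens) : #(Γ(X, W)) ≤ κ := by
  have hft : RingHom.FiniteType (f.appLE ⊤ W (by simp)).hom :=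
    HasRingHomProperty.appLE (P := @LocallyOfFiniteType) f ‹_› ⟨⊤, isAffineOpen_top _⟩ W _
  have h1 := aux_cardinalMk_le_of_ringHom_finiteType _ hft
  have h2 : #(Γ(Spec (CommRingCat.of k), ⊤)) = #k :=
    Cardinal.mk_congr (Scheme.ΓSpecIso (CommRingCat.of k)).commRingCatIsoToRingEquiv.toEquiv
  rw [h2] at h1
  exact h1.trans (max_le hk hκ)

include f in
lemma aux_noetherian_of_lft : IsLocallyNoetherian X := by
  refine ⟨fun W => ?_⟩
  have hft : RingHom.FiniteType (f.appLE ⊤ W (by simp)).hom :=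
    HasRingHomProperty.appLE (P := @LocallyOfFiniteType) f ‹_› ⟨⊤, isAffineOpen_top _⟩ W _
  letI := (f.appLE ⊤ W (by simp)).hom.toAlgebra
  have h' : Algebra.FiniteType (Γ(Spec (CommRingCat.of k), ⊤)) (Γ(X, W)) := hft
  have : IsNoetherianRing (Γ(Spec (CommRingCat.of k), ⊤)) :=
    isNoetherianRing_of_ringEquiv k
      (Scheme.ΓSpecIso (CommRingCat.of k)).commRingCatIsoToRingEquiv.symm
  exact Algebra.FiniteType.isNoetherianRing (Γ(Spec (CommRingCat.of k), ⊤)) (Γ(X, W))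

include hκ hk f in
lemma aux_card_sections_le (U : Opens X) : #(X.presheaf.obj (op U)) ≤ κ := by
  haveI := aux_noetherian_of_lft k X f
  haveI : IsNoetherian X := ⟨⟩
  haveI : TopologicalSpace.NoetherianSpace X := inferInstance
  have hex : ∀ x : X, x ∈ U → ∃ W : X.affineOpens, x ∈ W.1 ∧ W.1 ≤ U := by
    intro x hx
    obtain ⟨W, hW, hxW, hWU⟩ := (Opens.isBasis_iff_nbhd.mp X.isBasis_affineOpens) hx
    exact ⟨⟨W, hW⟩, hxW, hWU⟩
  choose W hxW hWU using hex
  have hUc : IsCompact (U : Set X) := TopologicalSpace.NoetherianSpace.isCompact _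
  obtain ⟨t, ht⟩ := hUc.elim_finite_subcover
    (fun x : {x : X // x ∈ U} => ((W x.1 x.2).1 : Set X))
    (fun x => (W x.1 x.2).1.2) (fun x hx => Set.mem_iUnion.mpr ⟨⟨x, hx⟩, hxW x hx⟩)
  let ι := {x : {x : X // x ∈ U} // x ∈ t}
  have hcov : U ≤ ⨆ i : ι, (W i.1.1 i.1.2).1 := by
    intro x hx
    obtain ⟨y, hy⟩ := Set.mem_iUnion.mp (ht hx)
    obtain ⟨hyt, hxy⟩ := Set.mem_iUnion.mp hy
    exact Opens.mem_iSup.mpr ⟨⟨y, hyt⟩, hxy⟩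
  let Φ : X.presheaf.obj (op U) → ∀ i : ι, X.presheaf.obj (op (W i.1.1 i.1.2).1) :=
    fun s i => X.presheaf.map (homOfLE (hWU i.1.1 i.1.2)).op s
  have hΦ : Function.Injective Φ := by
    intro s₁ s₂ h
    exact X.sheaf.eq_of_locally_eq' (fun i : ι => (W i.1.1 i.1.2).1)
      U (fun i => homOfLE (hWU i.1.1 i.1.2)) hcov s₁ s₂ (fun i => congrFun h i)
  refine (Cardinal.mk_le_of_injective hΦ).trans ?_
  rw [Cardinal.mk_pi]
  refine (Cardinal.prod_le_prod _ (fun _ => κ)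
    (fun i => aux_card_affine_sections_le k κ hκ hk X f _)).trans ?_
  rw [Cardinal.prod_const']
  exact Cardinal.pow_le hκ (Cardinal.lt_aleph0_of_finite ι)

end AuxCard

section AuxSheaf

variable (X : Scheme) (V : Opens X)

/-- The structure sheaf of `X` as a presheaf of abelian groups. -/
noncomputable def auxG : (Opens X)ᵒᵖ ⥤ AddCommGrpCat :=
  X.presheaf ⋙ (forget₂ CommRingCat RingCat ⋙ forget₂ RingCat AddCommGrpCat)

/-- The componentwise inclusion of the extension-by-zero presheaf into the structure sheaf. -/
noncomputable def auxIncl : extByZeroPresheaf X V ⟶ auxG X where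
  app U := AddCommGrpCat.ofHom (extByZeroSubgroup X V U).subtype
  naturality U W i := rfl

instance : (forget₂ CommRingCat RingCat ⋙ forget₂ RingCat AddCommGrpCat).ReflectsIsomorphisms := by
  haveI : (forget₂ CommRingCat RingCat).ReflectsIsomorphisms :=
    CategoryTheory.reflectsIsomorphisms_forget₂ _ _
  haveI : (forget₂ RingCat AddCommGrpCat).ReflectsIsomorphisms :=
    CategoryTheory.reflectsIsomorphisms_forget₂ _ _
  constructor
  intro A B f hf
  have h1 : IsIso ((forget₂ RingCat AddCommGrpCat).map ((forget₂ CommRingCat RingCat).map f)) := hf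
  have h2 : IsIso ((forget₂ CommRingCat RingCat).map f) :=
    isIso_of_reflects_iso _ (forget₂ RingCat AddCommGrpCat)
  exact isIso_of_reflects_iso f (forget₂ CommRingCat RingCat)

lemma auxG_isSheaf : Presheaf.IsSheaf (Opens.grothendieckTopology X) (auxG X) :=
  (TopCat.Presheaf.isSheaf_iff_isSheaf_comp
    (forget₂ CommRingCat RingCat ⋙ forget₂ RingCat AddCommGrpCat) X.presheaf).mp X.sheaf.cond

/-- The canonical morphism from the sheafification of the extension-by-zero presheaf
to the structure sheaf (as an abelian-group-valued sheaf). -/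
noncomputable def auxPsi : CategoryTheory.sheafify (Opens.grothendieckTopology X)
    (extByZeroPresheaf X V) ⟶ auxG X :=
  sheafifyLift _ (auxIncl X V) (auxG_isSheaf X)

instance : Presheaf.IsLocallyInjective (Opens.grothendieckTopology X) (auxIncl X V) :=
  Presheaf.isLocallyInjective_of_injective _ _ (fun _ => fun _ _ h => Subtype.ext h)

instance : Presheaf.IsLocallyInjective (Opens.grothendieckTopology X) (auxPsi X V) :=
  Presheaf.isLocallyInjective_of_isLocallyInjective_of_isLocallySurjective_fac
    (Opens.grothendieckTopology X) (auxIncl X V)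
    (toSheafify_sheafifyLift _ (auxIncl X V) (auxG_isSheaf X))

lemma auxPsi_inj (U : (Opens X)ᵒᵖ) : Function.Injective ((auxPsi X V).app U) := by
  have hsh : Presheaf.IsSheaf (Opens.grothendieckTopology X)
      (CategoryTheory.sheafify (Opens.grothendieckTopology X) (extByZeroPresheaf X V)) :=
    ((presheafToSheaf (Opens.grothendieckTopology X) AddCommGrpCat).obj
      (extByZeroPresheaf X V)).cond
  have hsep : Presieve.IsSeparated (Opens.grothendieckTopology X)
      (CategoryTheory.sheafify (Opens.grothendieckTopology X) (extByZeroPresheaf X V)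
        ⋙ forget AddCommGrpCat) := by
    apply Presieve.IsSheaf.isSeparated
    rw [← isSheaf_iff_isSheaf_of_type]
    exact ((sheafCompose (Opens.grothendieckTopology X) (forget AddCommGrpCat)).obj
      ⟨_, hsh⟩).cond
  exact (Presheaf.isLocallyInjective_iff_injective_of_separated _ _ hsep).mp inferInstance U

end AuxSheaf

/-- Let `k` be a field, `κ` an infinite cardinal with `|k| ≤ κ`,
`X` a scheme of finite type over `k`, and `V ⊆ X` open. Let `P` be the presheaf of
abelian groups on `X` with `P(U) = 𝒪_X(U)` if `U ⊆ V` and `P(U) = 0` otherwise.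
Then the sheafification `aP` of `P` (the extension by zero `(i_V)_! 𝒪_V`) satisfies
`|aP(U)| ≤ κ` for every open `U ⊆ X`. -/
theorem card_sections_sheafify_extByZero_le (k : Type) [Field k]
    (κ : Cardinal) (hκ : Cardinal.aleph0 ≤ κ) (hk : #k ≤ κ)
    (X : Scheme) (f : X ⟶ Spec (CommRingCat.of k))
    [LocallyOfFiniteType f] [CompactSpace X] (V : Opens X) :
    ∀ U : Opens X,
      #((CategoryTheory.sheafify (Opens.grothendieckTopology X)
        (extByZeroPresheaf X V)).obj (op U)) ≤ κ := by
  intro U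
  refine (Cardinal.mk_le_of_injective (auxPsi_inj X V (op U))).trans ?_
  exact aux_card_sections_le k κ hκ hk X f U
end

section
/- Let $X$ be a Noetherian topological space, let $\kappa$ be an infinite cardinal such that the set of open subsets of $X$ has cardinality at most $\kappa$, let $J$ be an index set with $|J| \le \kappa$, and let $(F_j)_{j \in J}$ be a family of sheaves of abelian groups on $X$ with $|F_j(U)| \le \kappa$ for all $j \in J$ and all open $U \subseteq X$. Then the coproduct sheaf $\bigoplus_{j \in J} F_j$ in the category of sheaves of abelian groups on $X$ satisfies $|(\bigoplus_{j \in J} F_j)(U)| \le \kappa$ for every open subset $U$ of $X$. -/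
open CategoryTheory CategoryTheory.Limits TopologicalSpace Cardinal Opposite

instance (X : TopCat.{0}) (J : Type) :
    HasColimitsOfShape (Discrete J) (Sheaf (Opens.grothendieckTopology X) AddCommGrpCat.{0}) :=
  Sheaf.instHasColimitsOfShape

namespace Aux

lemma mk_directSum_le {J : Type} (A : J → Type) [∀ j, AddCommGroup (A j)] {κ : Cardinal}
    (hκ : Cardinal.aleph0 ≤ κ) (hJ : #J ≤ κ) (hA : ∀ j, #(A j) ≤ κ) :
    #(DirectSum J A) ≤ κ := by
  classical
  have hsurj : Function.Surjective (fun l : List (Σ j, A j) =>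
      (l.map fun p => DirectSum.of A p.1 p.2).sum) := by
    intro f
    induction f using DFinsupp.induction with
    | h0 => exact ⟨[], rfl⟩
    | ha i b f _ _ ih =>
      obtain ⟨l, hl⟩ := ih
      refine ⟨⟨i, b⟩ :: l, ?_⟩
      simp only [List.map_cons, List.sum_cons]
      simp only at hl
      rw [hl]
      rfl
  have h1 : #(DirectSum J A) ≤ #(List (Σ j, A j)) := Cardinal.mk_le_of_surjective hsurj
  have h2 : #(Σ j, A j) ≤ κ := by
    rw [Cardinal.mk_sigma]
    calc (Cardinal.sum fun j => #(A j)) ≤ Cardinal.sum fun _ : J => κ :=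
          Cardinal.sum_le_sum _ _ hA
      _ = #J * κ := Cardinal.sum_const' _ _
      _ ≤ κ * κ := mul_le_mul' hJ le_rfl
      _ = κ := Cardinal.mul_eq_self hκ
  exact h1.trans ((Cardinal.mk_list_le_max _).trans (max_le hκ h2))


variable (X : TopCat.{0}) (J : Type)
  (F : J → Sheaf (Opens.grothendieckTopology X) AddCommGrpCat.{0})

/-- The objectwise direct sum presheaf. -/
noncomputable def P : (Opens X)ᵒᵖ ⥤ AddCommGrpCat where
  obj U := AddCommGrpCat.of (DirectSum J (fun j => (F j).val.obj U))
  map {U V} f := AddCommGrpCat.ofHom (DFinsupp.mapRange.addMonoidHom (fun j => ((F j).val.map f).hom))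
  map_id U := by
    have h : (fun j => ((F j).val.map (𝟙 U)).hom) = fun j => AddMonoidHom.id ((F j).val.obj U) := by
      funext j; rw [CategoryTheory.Functor.map_id]; rfl
    rw [h, DFinsupp.mapRange.addMonoidHom_id]; rfl
  map_comp {U V W} f g := by
    have h : (fun j => ((F j).val.map (f ≫ g)).hom)
        = fun j => ((F j).val.map g).hom.comp ((F j).val.map f).hom := by
      funext j; rw [CategoryTheory.Functor.map_comp]; rfl
    rw [h, DFinsupp.mapRange.addMonoidHom_comp]; rfl

/-- Identity, fixing the type. -/
def toDS {U : (Opens X)ᵒᵖ} (x : (P X J F).obj U) :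
    DirectSum J (fun j => (F j).val.obj U) := x

/-- Identity, fixing the type. -/
def ofDS {U : (Opens X)ᵒᵖ} (x : DirectSum J (fun j => (F j).val.obj U)) :
    (P X J F).obj U := x

@[simp] lemma toDS_ofDS {U : (Opens X)ᵒᵖ} (x : DirectSum J (fun j => (F j).val.obj U)) :
    toDS X J F (ofDS X J F x) = x := rfl

lemma ext_DS {U : (Opens X)ᵒᵖ} (x y : (P X J F).obj U)
    (h : ∀ j, toDS X J F x j = toDS X J F y j) : x = y := DFinsupp.ext h

@[simp] lemma P_map_apply {U V : (Opens X)ᵒᵖ} (f : U ⟶ V)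
    (x : (P X J F).obj U) (j : J) :
    toDS X J F ((P X J F).map f x) j = (F j).val.map f (toDS X J F x j) :=
  DFinsupp.mapRange_apply _ (fun j => ((F j).val.map f).hom.map_zero) _ j


theorem isSheaf_P [NoetherianSpace X] :
    Presheaf.IsSheaf (Opens.grothendieckTopology X) (P X J F) := by
  refine (TopCat.Presheaf.isSheaf_iff_isSheafUniqueGluing
    (C := AddCommGrpCat) (X := X) (P X J F)).mpr ?_
  intro ι U sf hsf
  classical
  set Fs : J → TopCat.Sheaf AddCommGrpCat X := fun j => ⟨(F j).val, (F j).cond⟩ with hFs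
  -- the componentwise families are compatible
  have hcomp : ∀ j, TopCat.Presheaf.IsCompatible (F j).val U
      (fun i => toDS X J F (sf i) j) := by
    intro j i i'
    have h := congrArg (fun x => toDS X J F x j) (hsf i i')
    simpa only [P_map_apply] using h
  have hglue := fun j => (Fs j).existsUnique_gluing U (fun i => toDS X J F (sf i) j) (hcomp j)
  choose g hg hgu using hglue
  -- a finite subcover
  obtain ⟨t, ht⟩ := (NoetherianSpace.isCompact ((iSup U : Opens X) : Set X)).elim_finite_subcover
      (fun i => (U i : Set X)) (fun i => (U i).isOpen)
      (by rw [Opens.coe_iSup])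
  set S : Finset J := t.sup (fun i => (toDS X J F (sf i)).support) with hS
  have hcover : (iSup U : Opens X) ≤ ⨆ i : t, U i := by
    intro x hx
    obtain ⟨i, hi, hxi⟩ := Set.mem_iUnion₂.1 (ht hx)
    exact Opens.mem_iSup.2 ⟨⟨i, hi⟩, hxi⟩
  -- components outside `S` vanish
  have hz : ∀ j ∉ S, g j = 0 := by
    intro j hj
    refine (Fs j).eq_of_locally_eq' (fun i : t => U i) (iSup U)
      (fun i => homOfLE (le_iSup U (i : ι))) hcover _ _ (fun i => ?_)
    have h1 : (toDS X J F (sf i)) j = 0 := by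
      rw [← DFinsupp.notMem_support_iff]
      exact fun hmem => hj (Finset.le_sup (f := fun i => (toDS X J F (sf i)).support) i.2 hmem)
    have h2 := hg j i
    have h3 : ((Fs j).val.map (homOfLE (le_iSup U (i : ι))).op) (g j) = 0 := h2.trans h1
    exact h3.trans (AddMonoidHom.map_zero _).symm
  set s : (P X J F).obj (op (iSup U)) :=
    ofDS X J F (DFinsupp.mk S (fun j => g j)) with hs
  have hsj : ∀ j, toDS X J F s j = g j := by
    intro j
    rw [hs, toDS_ofDS, DFinsupp.mk_apply]
    split
    · rfl
    · next h => rw [hz j h]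
  refine ⟨s, fun i => ?_, fun y hy => ?_⟩
  · refine ext_DS X J F _ _ fun j => ?_
    rw [P_map_apply, hsj]
    exact hg j i
  · refine ext_DS X J F _ _ fun j => ?_
    rw [hsj]
    refine hgu j _ fun i => ?_
    have h := congrArg (fun x => toDS X J F x j) (hy i)
    simpa only [P_map_apply] using h

/-- The coprojection into the direct sum presheaf. -/
noncomputable def incl (j : J) : (F j).val ⟶ P X J F :=
  letI : DecidableEq J := Classical.decEq J
  { app := fun U => AddCommGrpCat.ofHom (DirectSum.of (fun j' => ((F j').val.obj U : Type)) j :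
      (F j).val.obj U →+ DirectSum J (fun j' => (F j').val.obj U))
    naturality := fun U V f => by
      classical
      refine AddCommGrpCat.ext fun x => ?_
      refine ext_DS X J F _ _ fun j' => ?_
      show (DirectSum.of (fun j' => ((F j').val.obj V : Type)) j ((F j).val.map f x)) j'
        = toDS X J F ((P X J F).map f
            (ofDS X J F (DirectSum.of (fun j' => ((F j').val.obj U : Type)) j x))) j'
      rw [P_map_apply, toDS_ofDS]
      by_cases h : j = j'
      · subst h
        rw [DirectSum.of_eq_same, DirectSum.of_eq_same]
      · rw [DirectSum.of_eq_of_ne _ _ _ (Ne.symm h), DirectSum.of_eq_of_ne _ _ _ (Ne.symm h),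
          AddMonoidHom.map_zero] }

variable [NoetherianSpace X]

/-- The direct sum presheaf as a sheaf. -/
noncomputable def sheafP : Sheaf (Opens.grothendieckTopology X) AddCommGrpCat :=
  ⟨P X J F, isSheaf_P X J F⟩

/-- The cofan on `F` with point the direct sum sheaf. -/
noncomputable def cofan : Cofan F :=
  Cofan.mk (sheafP X J F) (fun j => ⟨incl X J F j⟩)

/-- The direct sum sheaf is the coproduct of the `F j`. -/
noncomputable def isColimitCofan : IsColimit (cofan X J F) := by
  classical
  have : ReflectsColimitsOfSize (sheafToPresheaf (Opens.grothendieckTopology X) AddCommGrpCat) :=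
    fullyFaithful_reflectsColimits _
  apply isColimitOfReflects (sheafToPresheaf (Opens.grothendieckTopology X) AddCommGrpCat)
  apply evaluationJointlyReflectsColimits
  intro U
  let arr : ∀ (s : Cocone ((Discrete.functor F ⋙
        sheafToPresheaf (Opens.grothendieckTopology X) AddCommGrpCat) ⋙
        (evaluation (Opens X)ᵒᵖ AddCommGrpCat).obj U)) (j : J),
      (((F j).val.obj U : Type) →+ s.pt) :=
    fun s j => (s.ι.app ⟨j⟩).hom
  let desc0 : ∀ s : Cocone ((Discrete.functor F ⋙
        sheafToPresheaf (Opens.grothendieckTopology X) AddCommGrpCat) ⋙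
        (evaluation (Opens X)ᵒᵖ AddCommGrpCat).obj U),
      (AddCommGrpCat.of (DirectSum J (fun j => ((F j).val.obj U : Type))) ⟶ s.pt) :=
    fun s => AddCommGrpCat.ofHom (DirectSum.toAddMonoid (arr s))
  refine { desc := fun s => desc0 s, fac := ?_, uniq := ?_ }
  · rintro s ⟨j⟩
    refine AddCommGrpCat.ext fun x => ?_
    exact DirectSum.toAddMonoid_of (arr s) j x
  · intro s m hm
    refine AddCommGrpCat.ext fun y => ?_
    refine congrFun ?_ y
    refine congrArg DFunLike.coe (DirectSum.addHom_ext' fun j => AddMonoidHom.ext fun x => ?_)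
    show m ((DirectSum.of (fun i => ((F i).val.obj U : Type)) j) x)
      = desc0 s ((DirectSum.of (fun i => ((F i).val.obj U : Type)) j) x)
    have h2 : desc0 s ((DirectSum.of (fun i => ((F i).val.obj U : Type)) j) x)
        = arr s j x := DirectSum.toAddMonoid_of (arr s) j x
    rw [h2]
    exact ConcreteCategory.congr_hom (hm ⟨j⟩) x

end Aux

/-- Let `X` be a Noetherian topological space, `κ` an infinite
cardinal such that the set of opens of `X` has cardinality at most `κ`, `J` an index
set with `|J| ≤ κ`, and `(F j)_{j ∈ J}` a family of sheaves of abelian groups on `X`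
with `|F j (U)| ≤ κ` for all `j` and all opens `U`. Then the coproduct sheaf
`⨁_{j ∈ J} F j` satisfies `|(⨁ F j)(U)| ≤ κ` for every open `U`. -/
theorem card_sections_sheaf_coproduct_le (X : TopCat) [NoetherianSpace X]
    (κ : Cardinal) (hκ : Cardinal.aleph0 ≤ κ) (hOp : #(Opens X) ≤ κ)
    (J : Type) (hJ : #J ≤ κ)
    (F : J → Sheaf (Opens.grothendieckTopology X) AddCommGrpCat)
    (hF : ∀ (j : J) (U : Opens X), #((F j).val.obj (op U)) ≤ κ) :
    ∀ U : Opens X, #((∐ F).val.obj (op U)) ≤ κ := by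
  intro U
  have hc := Aux.isColimitCofan X J F
  have e : (∐ F) ≅ (Aux.cofan X J F).pt :=
    IsColimit.coconePointUniqueUpToIso (colimit.isColimit _) hc
  have e2 : (∐ F).val.obj (op U) ≅ (Aux.P X J F).obj (op U) :=
    (sheafToPresheaf (Opens.grothendieckTopology X) AddCommGrpCat ⋙
      (evaluation _ _).obj (op U)).mapIso e
  have e3 := ((forget AddCommGrpCat).mapIso e2).toEquiv
  have hmk : #((∐ F).val.obj (op U)) = #(DirectSum J (fun j => (F j).val.obj (op U))) :=
    Cardinal.mk_congr e3
  rw [hmk]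
  exact Aux.mk_directSum_le _ hκ hJ (fun j => hF j U)
end

section
/- Let $X$ be a Noetherian topological space, let $\kappa$ be an infinite cardinal such that the set of open subsets of $X$ has cardinality at most $\kappa$, and let $N \to M$ be a monomorphism of sheaves of abelian groups on $X$ such that $|M(U)| \le \kappa$ for every open $U \subseteq X$. Then the cokernel sheaf $M/N$ (the cokernel of $N \to M$ in the category of sheaves of abelian groups on $X$) satisfies $|(M/N)(U)| \le \kappa$ for every open subset $U$ of $X$. -/
open CategoryTheory CategoryTheory.Limits TopologicalSpace Cardinal Opposite

/-- Let `X` be a Noetherian topological space, `κ` an infinite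
cardinal such that the set of opens of `X` has cardinality at most `κ`, and
`φ : N ⟶ M` a monomorphism of sheaves of abelian groups on `X` with `|M(U)| ≤ κ`
for every open `U`. Then the cokernel sheaf `M/N` satisfies `|(M/N)(U)| ≤ κ`
for every open `U`. -/
theorem card_sections_sheaf_cokernel_le (X : TopCat) [NoetherianSpace X]
    (κ : Cardinal) (hκ : Cardinal.aleph0 ≤ κ) (hOp : #(Opens X) ≤ κ)
    (N M : Sheaf (Opens.grothendieckTopology X) AddCommGrpCat)
    (φ : N ⟶ M) [Mono φ]
    (hM : ∀ U : Opens X, #(M.val.obj (op U)) ≤ κ) :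
    ∀ U : Opens X, #((cokernel φ).val.obj (op U)) ≤ κ := by
  have h : Sheaf.IsLocallySurjective (cokernel.π φ) := by
    rw [Sheaf.isLocallySurjective_iff_epi']
    infer_instance
  set Q := cokernel φ with hQ
  intro U
  have key : ∀ s : Q.val.obj (op U),
      ∃ L : List (Σ V : Opens X, M.val.obj (op V)),
        (∀ x ∈ U, ∃ p ∈ L, x ∈ p.1) ∧
        ∀ p ∈ L, ∃ g : p.1 ⟶ U,
          (cokernel.π φ).hom.app (op p.1) p.2
            = Q.val.map g.op s := by
    intro s
    have hmem : ∀ x ∈ U, ∃ (V : Opens X) (f : V ⟶ U),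
        Presheaf.imageSieve (cokernel.π φ).hom s f ∧ x ∈ V := h.imageSieve_mem s
    choose V f hf hxV using hmem
    have hcomp : IsCompact (U : Set X) := NoetherianSpace.isCompact _
    obtain ⟨t, ht⟩ := hcomp.elim_finite_subcover
      (ι := {x : X // x ∈ U})
      (fun i => ((V i.1 i.2 : Opens X) : Set X))
      (fun i => (V i.1 i.2).2)
      (fun x hx => Set.mem_iUnion.2 ⟨⟨x, hx⟩, hxV x hx⟩)
    refine ⟨t.toList.map (fun i =>
      ⟨V i.1 i.2, Presheaf.localPreimage (cokernel.π φ).hom s (f i.1 i.2) (hf i.1 i.2)⟩), ?_, ?_⟩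
    · intro x hx
      obtain ⟨i, hit, hxi⟩ := Set.mem_iUnion₂.1 (ht hx)
      exact ⟨_, List.mem_map_of_mem (Finset.mem_toList.2 hit), hxi⟩
    · intro p hp
      obtain ⟨i, -, rfl⟩ := List.mem_map.1 hp
      exact ⟨f i.1 i.2, Presheaf.app_localPreimage (cokernel.π φ).hom s (f i.1 i.2) (hf i.1 i.2)⟩
  choose L hLcov hLres using key
  have hinj : Function.Injective L := by
    intro s t hst
    have hLrt : ∀ p ∈ L s, ∃ g : p.1 ⟶ U,
        (cokernel.π φ).hom.app (op p.1) p.2 = Q.val.map g.op t := by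
      rw [hst]; exact hLres t
    refine TopCat.Sheaf.eq_of_locally_eq' Q
      (fun p : {p // p ∈ L s} => p.1.1) U
      (fun p => (hLres s p.1 p.2).choose) ?_ s t ?_
    · intro x hx
      obtain ⟨p, hp, hxp⟩ := hLcov s x hx
      exact Opens.mem_iSup.2 ⟨⟨p, hp⟩, hxp⟩
    · intro p
      have h1 := (hLres s p.1 p.2).choose_spec
      have h2 := (hLrt p.1 p.2).choose_spec
      have h3 : (hLrt p.1 p.2).choose = (hLres s p.1 p.2).choose := Subsingleton.elim _ _
      rw [h3] at h2
      exact h1.symm.trans h2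
  calc #(Q.val.obj (op U))
      ≤ #(List (Σ V : Opens X, M.val.obj (op V))) := mk_le_of_injective hinj
    _ ≤ max ℵ₀ #(Σ V : Opens X, M.val.obj (op V)) := mk_list_le_max _
    _ ≤ κ := by
        apply max_le hκ
        rw [mk_sigma]
        calc (Cardinal.sum fun V : Opens X => #(M.val.obj (op V)))
            ≤ Cardinal.sum fun _ : Opens X => κ := Cardinal.sum_le_sum _ _ (fun V => hM V)
          _ = #(Opens X) * κ := Cardinal.sum_const' _ _
          _ ≤ κ * κ := mul_le_mul_left hOp κ
          _ = κ := mul_eq_self hκ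
end

section
/- Let $X$ be a Noetherian topological space, let $M$ be a subsheaf of a sheaf of abelian groups on $X$, and more generally let $\kappa$ be an infinite cardinal with the set of open subsets of $X$ of cardinality at most $\kappa$. If $G$ is a sheaf of abelian groups on $X$ with $|G(U)| \le \kappa$ for every open $U$, then every subsheaf $M \subseteq G$ and every quotient of such a subsheaf $M$ by a subsheaf $N \subseteq M$ (the cokernel of $N \to M$ in sheaves of abelian groups) has all section groups of cardinality at most $\kappa$: $|M(U)| \le \kappa$ and $|(M/N)(U)| \le \kappa$ for every open $U \subseteq X$. -/
open CategoryTheory CategoryTheory.Limits TopologicalSpace Cardinal Opposite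

lemma card_le_of_locallySurjective {X : TopCat} [NoetherianSpace X]
    {κ : Cardinal} (hκ : Cardinal.aleph0 ≤ κ) (hOp : #(Opens X) ≤ κ)
    {A B : Sheaf (Opens.grothendieckTopology X) AddCommGrpCat} (π : A ⟶ B)
    [Presheaf.IsLocallySurjective (Opens.grothendieckTopology X) π.hom]
    (hA : ∀ U : Opens X, #(A.val.obj (op U)) ≤ κ) :
    ∀ U : Opens X, #(B.val.obj (op U)) ≤ κ := by
  intro U
  have hex : ∀ s : B.val.obj (op U), ∃ l : List (Σ V : Opens X, A.val.obj (op V)),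
      (∀ p ∈ l, ∃ f : p.1 ⟶ U, π.hom.app (op p.1) p.2 = B.val.map f.op s) ∧
      ((U : Set X) ⊆ ⋃ p ∈ l, ((p.1 : Opens X) : Set X)) := by
    intro s
    have hmem := Presheaf.imageSieve_mem (Opens.grothendieckTopology X) π.hom (U := op U) s
    set S := Presheaf.imageSieve π.hom s with hS
    have hcov : (U : Set X) ⊆
        ⋃ i : {V : Opens X // ∃ f : V ⟶ U, S.arrows f}, ((i.1 : Opens X) : Set X) := by
      intro x hx
      obtain ⟨V, f, hf, hxV⟩ := hmem x hx
      exact Set.mem_iUnion.2 ⟨⟨V, f, hf⟩, hxV⟩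
    obtain ⟨t, ht⟩ := (NoetherianSpace.isCompact (U : Set X)).elim_finite_subcover
      (fun i : {V : Opens X // ∃ f : V ⟶ U, S.arrows f} => ((i.1 : Opens X) : Set X))
      (fun i => i.1.isOpen) hcov
    refine ⟨t.toList.map (fun i => ⟨i.1, i.2.choose_spec.choose⟩), ?_, ?_⟩
    · intro p hp
      simp only [List.mem_map, Finset.mem_toList] at hp
      obtain ⟨i, hi, rfl⟩ := hp
      exact ⟨i.2.choose, i.2.choose_spec.choose_spec⟩
    · intro x hx
      obtain ⟨i, hi⟩ := Set.mem_iUnion.1 (ht hx)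
      simp only [Set.mem_iUnion] at hi
      obtain ⟨hit, hxi⟩ := hi
      exact Set.mem_biUnion (List.mem_map.2 ⟨i, Finset.mem_toList.2 hit, rfl⟩) hxi
  choose g hg₁ hg₂ using hex
  have hinj : Function.Injective g := by
    intro s₁ s₂ h
    let S : Sieve U :=
      { arrows := fun V _ => ∃ p ∈ g s₁, V ≤ p.1
        downward_closed := by
          rintro V W f ⟨p, hp, hV⟩ g'
          exact ⟨p, hp, (leOfHom g').trans hV⟩ }
    have hS : S ∈ Opens.grothendieckTopology X U := by
      intro x hx
      obtain ⟨p, hp, hxp⟩ := Set.mem_iUnion₂.1 (hg₂ s₁ hx)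
      obtain ⟨f, _⟩ := hg₁ s₁ p hp
      exact ⟨p.1, f, ⟨p, hp, le_refl _⟩, hxp⟩
    have hsheaf : Presieve.IsSheaf (Opens.grothendieckTopology X)
        (B.val ⋙ forget AddCommGrpCat) :=
      (isSheaf_iff_isSheaf_of_type _ _).1
        ((sheafCompose (Opens.grothendieckTopology X) (forget AddCommGrpCat)).obj B).cond
    have hsep := hsheaf.isSeparated S hS
    refine hsep.ext ?_
    rintro V f ⟨p, hp, hV⟩
    obtain ⟨fp, hfp₁⟩ := hg₁ s₁ p hp
    have hp₂ : p ∈ g s₂ := h ▸ hp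
    obtain ⟨fp₂, hfp₂⟩ := hg₁ s₂ p hp₂
    have hfp : fp₂ = fp := Subsingleton.elim _ _
    rw [hfp] at hfp₂
    have hf : f = homOfLE hV ≫ fp := Subsingleton.elim _ _
    show B.val.map f.op s₁ = B.val.map f.op s₂
    rw [hf, op_comp, B.val.map_comp, comp_apply, comp_apply, ← hfp₁, ← hfp₂]
  refine (Cardinal.mk_le_of_injective hinj).trans ?_
  refine (Cardinal.mk_list_le_max _).trans (max_le hκ ?_)
  rw [Cardinal.mk_sigma]
  calc (Cardinal.sum fun V : Opens X => #(A.val.obj (op V)))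
      ≤ Cardinal.sum (fun _ : Opens X => κ) := Cardinal.sum_le_sum _ _ fun V => hA V
    _ = #(Opens X) * κ := Cardinal.sum_const' _ _
    _ ≤ κ * κ := mul_le_mul_left hOp κ
    _ = κ := Cardinal.mul_eq_self hκ

/-- Let `X` be a Noetherian topological space and `κ` an infinite
cardinal such that the set of opens of `X` has cardinality at most `κ`. If `G` is a
sheaf of abelian groups on `X` with `|G(U)| ≤ κ` for every open `U`, then every
subsheaf `M ⊆ G` and every quotient `M/N` of `M` by a subsheaf `N ⊆ M` has all
section groups of cardinality at most `κ`: `|M(U)| ≤ κ` and `|(M/N)(U)| ≤ κ` for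
every open `U ⊆ X`. -/
theorem card_sections_subquotient_le (X : TopCat) [NoetherianSpace X]
    (κ : Cardinal) (hκ : Cardinal.aleph0 ≤ κ) (hOp : #(Opens X) ≤ κ)
    (G M N : Sheaf (Opens.grothendieckTopology X) AddCommGrpCat)
    (hG : ∀ U : Opens X, #(G.val.obj (op U)) ≤ κ)
    (ι : M ⟶ G) [Mono ι] (ν : N ⟶ M) [Mono ν] :
    (∀ U : Opens X, #(M.val.obj (op U)) ≤ κ) ∧
      (∀ U : Opens X, #((cokernel ν).val.obj (op U)) ≤ κ) := by
  have hM : ∀ U : Opens X, #(M.val.obj (op U)) ≤ κ := by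
    intro U
    have h1 : Mono ι.hom := inferInstance
    have h2 : Mono (ι.hom.app (op U)) := inferInstance
    exact (Cardinal.mk_le_of_injective ((AddCommGrpCat.mono_iff_injective _).1 h2)).trans (hG U)
  refine ⟨hM, ?_⟩
  have hls : Sheaf.IsLocallySurjective (cokernel.π ν) := by
    rw [Sheaf.isLocallySurjective_iff_epi']
    infer_instance
  exact card_le_of_locallySurjective hκ hOp (cokernel.π ν) hM
end
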